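/- Let (x,y) ∈ ℂ² with |p'(x)| > 2|a| and a ≠ 0. If (ξ,η) ∈ ℂ² is a tangent vector and (ξ',η') = (p'(x)ξ + aη, aξ) is its image under the derivative of the Hénon map, then |ξ'| < |η'| implies |ξ| < |η|. -/
import Mathlib

/-- Vertical cone invariance (backward): if `|p'(x)| > 2|a|`, `a ≠ 0`, and
`(ξ',η') = (p'(x)ξ + aη, aξ)` satisfies `|ξ'| < |η'|`, then `|ξ| < |η|`. -/
theorem henon_vertical_cone (p : Polynomial ℂ) (a x ξ η ξ' η' : ℂ) (ha : a ≠ 0)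
    (hx : 2 * ‖a‖ < ‖(Polynomial.derivative p).eval x‖)
    (hξ' : ξ' = (Polynomial.derivative p).eval x * ξ + a * η)
    (hη' : η' = a * ξ)
    (h : ‖ξ'‖ < ‖η'‖) : ‖ξ‖ < ‖η‖ := by
  have ha' : 0 < ‖a‖ := norm_pos_iff.mpr ha
  have h1 : ‖(Polynomial.derivative p).eval x * ξ‖ - ‖a * η‖ ≤ ‖ξ'‖ := by
    rw [hξ']
    have := norm_sub_le ((Polynomial.derivative p).eval x * ξ + a * η) (a * η)
    simp only [add_sub_cancel_right] at this
    linarith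
  rw [hη', norm_mul] at h
  rw [norm_mul, norm_mul] at h1
  nlinarith [norm_nonneg ξ, norm_nonneg η]
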